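/- Let P(λ) ∈ ℂ^{n×n}[λ] be an upper-triangular matrix polynomial and D ⊆ ℂ. Then P is hyperstable with respect to D if and only if P is stable with respect to D (i.e., det P(μ) ≠ 0 for all μ ∈ D). -/

import Mathlib

/-- `P` is hyperstable with respect to `D`. -/
def Hyperstable {n : ℕ} (P : ℂ → Matrix (Fin n) (Fin n) ℂ) (D : Set ℂ) : Prop :=
  ∀ x : Fin n → ℂ, x ≠ 0 → ∃ y : Fin n → ℂ, y ≠ 0 ∧
    ∀ μ ∈ D, dotProduct (star y) ((P μ).mulVec x) ≠ 0

theorem stmt4 {n : ℕ} (P : Matrix (Fin n) (Fin n) (Polynomial ℂ)) (D : Set ℂ)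
    (htri : ∀ i j : Fin n, j < i → P i j = 0) :
    Hyperstable (fun μ => P.map (Polynomial.eval μ)) D ↔
      ∀ μ ∈ D, (P.map (Polynomial.eval μ)).det ≠ 0 := by
  constructor
  · intro hH μ hμ hdet
    obtain ⟨x, hx, hx0⟩ := (Matrix.exists_mulVec_eq_zero_iff).mpr hdet
    obtain ⟨y, hy, hall⟩ := hH x hx
    exact hall μ hμ (by rw [hx0, dotProduct_zero])
  · intro hdet x hx
    have htri' : ∀ μ, (P.map (Polynomial.eval μ)).BlockTriangular id := by
      intro μ i j hij
      simp [Matrix.map_apply, htri i j hij]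
    have hdiag : ∀ μ ∈ D, ∀ i, (P i i).eval μ ≠ 0 := by
      intro μ hμ i h0
      apply hdet μ hμ
      rw [Matrix.det_of_upperTriangular (htri' μ)]
      exact Finset.prod_eq_zero (Finset.mem_univ i) (by simpa using h0)
    have hne : (Finset.univ.filter fun i => x i ≠ 0).Nonempty := by
      by_contra h
      apply hx
      funext i
      by_contra hxi
      exact h ⟨i, Finset.mem_filter.mpr ⟨Finset.mem_univ i, hxi⟩⟩
    set i := (Finset.univ.filter fun i => x i ≠ 0).max' hne with hi
    have hxi : x i ≠ 0 :=
      (Finset.mem_filter.mp ((Finset.univ.filter fun i => x i ≠ 0).max'_mem hne)).2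
    have hmax : ∀ j, i < j → x j = 0 := by
      intro j hj
      by_contra hxj
      exact absurd (Finset.le_max' _ j (Finset.mem_filter.mpr ⟨Finset.mem_univ j, hxj⟩))
        (not_le.mpr hj)
    refine ⟨Pi.single i 1, ?_, ?_⟩
    · intro h
      have := congrFun h i
      simp [Pi.single_eq_same] at this
    · intro μ hμ
      have hval : dotProduct (star (Pi.single i 1 : Fin n → ℂ))
          ((P.map (Polynomial.eval μ)).mulVec x) = (P i i).eval μ * x i := by
        rw [dotProduct, Finset.sum_eq_single i]
        · have hrow : (P.map (Polynomial.eval μ)).mulVec x i = (P i i).eval μ * x i := by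
            rw [Matrix.mulVec, dotProduct, Finset.sum_eq_single i]
            · simp [Matrix.map_apply]
            · intro j _ hj
              rcases lt_or_gt_of_ne hj with h | h
              · simp [Matrix.map_apply, htri i j h]
              · simp [hmax j h]
            · intro h; exact absurd (Finset.mem_univ i) h
          simp [hrow, Pi.single_eq_same]
        · intro j _ hj
          simp [Pi.single_eq_of_ne hj]
        · intro h; exact absurd (Finset.mem_univ i) h
      rw [hval]
      exact mul_ne_zero (hdiag μ hμ i) hxi
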